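/- Assume (D1), (D2), that c₁ is σ-integrable with c₁(ξ) > 0 for all ξ, and that there exist δ ∈ (0,1) and C > 0 such that |φ(r,ξ)| ≤ C·r for all 0 < r ≤ δ and all ξ, where φ(r,ξ) := ln(r^{α+1} q(r,ξ) / c₁(ξ)). Then the three conditions of Sato's absolute-continuity criterion hold for the pair (ν, ν^α_{σ₁}): (a) ∫_{S^{d-1}} ∫_0^∞ 1_{{|φ(r,ξ)| ≤ 1}} φ(r,ξ)² c₁(ξ) r^{-α-1} dr σ(dξ) < ∞; (b) ∫_{S^{d-1}} ∫_0^∞ 1_{{φ(r,ξ) > 1}} q(r,ξ) dr σ(dξ) < ∞ (note e^{φ(r,ξ)} c₁(ξ) r^{-α-1} = q(r,ξ)); (c) ∫_{S^{d-1}} ∫_0^∞ 1_{{φ(r,ξ) < -1}} c₁(ξ) r^{-α-1} dr σ(dξ) < ∞. (These are the conditions verified in the proof of Theorem 4.1(i), establishing mutual absolute continuity of a layered stable process and its short time limiting α-stable process.) -/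

import Mathlib

open MeasureTheory Set Filter

/-- Auxiliary: if a nonnegative-valued double integrand is dominated by a product
`a ξ * k r` with `a` integrable over the sphere and `k` integrable on `(0,∞)`,
then the double lower integral is finite. -/
lemma sato_aux_lt_top {X : Type*} [MeasurableSpace X] (μ : Measure X)
    (F : X → ℝ → ℝ) (a : X → ℝ) (ha0 : ∀ ξ, 0 ≤ a ξ) (ha : Integrable a μ)
    (k : ℝ → ℝ) (hk : IntegrableOn k (Set.Ioi 0))
    (hb : ∀ ξ, ∀ r ∈ Set.Ioi (0:ℝ), F ξ r ≤ a ξ * k r) :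
    ∫⁻ ξ, (∫⁻ r in Set.Ioi (0:ℝ), ENNReal.ofReal (F ξ r)) ∂μ < ⊤ := by
  set K := ∫⁻ r in Set.Ioi (0:ℝ), ENNReal.ofReal (k r) with hKdef
  have hKlt : K < ⊤ := hk.lintegral_lt_top
  have step : ∀ ξ, (∫⁻ r in Set.Ioi (0:ℝ), ENNReal.ofReal (F ξ r))
      ≤ ENNReal.ofReal (a ξ) * K := by
    intro ξ
    calc ∫⁻ r in Set.Ioi (0:ℝ), ENNReal.ofReal (F ξ r)
        ≤ ∫⁻ r in Set.Ioi (0:ℝ), ENNReal.ofReal (a ξ) * ENNReal.ofReal (k r) := by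
          refine lintegral_mono_ae ((ae_restrict_iff' measurableSet_Ioi).2
            (ae_of_all _ fun r hr => ?_))
          calc ENNReal.ofReal (F ξ r) ≤ ENNReal.ofReal (a ξ * k r) :=
                ENNReal.ofReal_le_ofReal (hb ξ r hr)
            _ = _ := ENNReal.ofReal_mul (ha0 ξ)
      _ = ENNReal.ofReal (a ξ) * K := lintegral_const_mul' _ _ ENNReal.ofReal_ne_top
  calc ∫⁻ ξ, (∫⁻ r in Set.Ioi (0:ℝ), ENNReal.ofReal (F ξ r)) ∂μ
      ≤ ∫⁻ ξ, ENNReal.ofReal (a ξ) * K ∂μ := lintegral_mono step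
    _ = (∫⁻ ξ, ENNReal.ofReal (a ξ) ∂μ) * K := lintegral_mul_const' _ _ hKlt.ne
    _ < ⊤ := ENNReal.mul_lt_top ha.lintegral_lt_top hKlt

/-- The three conditions of Sato's absolute-continuity criterion for the pair
`(ν, ν^α_{σ₁})`, verified in the proof of Theorem 4.1(i): under (D1), (D2), with
`c₁` positive and with `φ(r,ξ) = ln(r^{α+1} q(r,ξ) / c₁(ξ))` satisfying
`|φ(r,ξ)| ≤ C r` near the origin, the three integrals (a), (b), (c) are finite. -/
theorem layered_stable_sato_absolute_continuity_conditions
    (d : ℕ) (hd : 1 ≤ d)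
    (σ : Measure (Metric.sphere (0 : EuclideanSpace ℝ (Fin d)) 1))
    [IsFiniteMeasure σ]
    (α β : ℝ) (hα0 : 0 < α) (hα2 : α < 2) (hβ : 0 < β)
    (q : ℝ → Metric.sphere (0 : EuclideanSpace ℝ (Fin d)) 1 → ℝ)
    (hq_meas : Measurable (Function.uncurry q))
    (hq_pos : ∀ r : ℝ, 0 < r → ∀ ξ, 0 < q r ξ)
    (c₁ C₁ C₂ : Metric.sphere (0 : EuclideanSpace ℝ (Fin d)) 1 → ℝ)
    (hc₁_pos : ∀ ξ, 0 < c₁ ξ) (hc₁_int : Integrable c₁ σ)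
    (hC₁_nonneg : ∀ ξ, 0 ≤ C₁ ξ) (hC₁_int : Integrable C₁ σ)
    (hD1 : ∀ ξ, ∀ r : ℝ, 0 < r → r ≤ 1 → q r ξ ≤ C₁ ξ * r ^ (-α - 1))
    (hC₂_nonneg : ∀ ξ, 0 ≤ C₂ ξ) (hC₂_int : Integrable C₂ σ)
    (hD2 : ∀ ξ, ∀ r : ℝ, 1 ≤ r → q r ξ ≤ C₂ ξ * r ^ (-β - 1))
    (φ : ℝ → Metric.sphere (0 : EuclideanSpace ℝ (Fin d)) 1 → ℝ)
    (hφ : ∀ r : ℝ, 0 < r → ∀ ξ, φ r ξ = Real.log (r ^ (α + 1) * q r ξ / c₁ ξ))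
    (δ C : ℝ) (hδ0 : 0 < δ) (hδ1 : δ < 1) (hC : 0 < C)
    (hφ_lip : ∀ ξ, ∀ r : ℝ, 0 < r → r ≤ δ → |φ r ξ| ≤ C * r) :
    (∫⁻ ξ, (∫⁻ r in Ioi (0 : ℝ), ENNReal.ofReal
      (if |φ r ξ| ≤ 1 then (φ r ξ) ^ 2 * (c₁ ξ * r ^ (-α - 1)) else 0)) ∂σ < ⊤) ∧
    (∫⁻ ξ, (∫⁻ r in Ioi (0 : ℝ), ENNReal.ofReal
      (if 1 < φ r ξ then q r ξ else 0)) ∂σ < ⊤) ∧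
    (∫⁻ ξ, (∫⁻ r in Ioi (0 : ℝ), ENNReal.ofReal
      (if φ r ξ < -1 then c₁ ξ * r ^ (-α - 1) else 0)) ∂σ < ⊤) := by
  set r₀ : ℝ := min δ C⁻¹ with hr₀def
  have hr₀ : 0 < r₀ := lt_min hδ0 (by positivity)
  have hr₀δ : r₀ ≤ δ := min_le_left _ _
  -- if r ≤ r₀ then |φ r ξ| ≤ 1
  have hsmall : ∀ ξ, ∀ r : ℝ, 0 < r → r ≤ r₀ → |φ r ξ| ≤ 1 := by
    intro ξ r hr hrr₀
    have h1 := hφ_lip ξ r hr (hrr₀.trans hr₀δ)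
    have h2 : C * r ≤ C * C⁻¹ :=
      mul_le_mul_of_nonneg_left (hrr₀.trans (min_le_right _ _)) hC.le
    rw [mul_inv_cancel₀ hC.ne'] at h2
    linarith
  refine ⟨?_, ?_, ?_⟩
  · -- condition (a)
    set k : ℝ → ℝ := fun r => if r ≤ δ then C ^ 2 * r ^ (1 - α) else r ^ (-α - 1)
      with hkdef
    have hk0 : ∀ r : ℝ, 0 < r → 0 ≤ k r := by
      intro r hr; simp only [hkdef]; split <;> positivity
    have hk_int : IntegrableOn k (Ioi (0:ℝ)) := by
      have h1 : IntegrableOn (fun r : ℝ => C ^ 2 * r ^ (1 - α)) (Ioc 0 δ) := by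
        have := (intervalIntegral.intervalIntegrable_rpow'
          (show (-1:ℝ) < 1 - α by linarith) (a := 0) (b := δ))
        rw [intervalIntegrable_iff_integrableOn_Ioc_of_le hδ0.le] at this
        exact this.const_mul _
      have h2 : IntegrableOn (fun r : ℝ => r ^ (-α - 1)) (Ioi δ) :=
        integrableOn_Ioi_rpow_of_lt (by linarith) hδ0
      have h1' : IntegrableOn k (Ioc 0 δ) :=
        h1.congr_fun (fun r hr => by simp [hkdef, hr.2]) measurableSet_Ioc
      have h2' : IntegrableOn k (Ioi δ) :=
        h2.congr_fun (fun r hr => by simp [hkdef, not_le.2 (mem_Ioi.1 hr)])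
          measurableSet_Ioi
      rw [← Ioc_union_Ioi_eq_Ioi hδ0.le]
      exact h1'.union h2'
    refine sato_aux_lt_top σ _ c₁ (fun ξ => (hc₁_pos ξ).le) hc₁_int k hk_int ?_
    intro ξ r hr
    have hrpos : (0:ℝ) < r := mem_Ioi.1 hr
    by_cases hphi : |φ r ξ| ≤ 1
    · rw [if_pos hphi]
      by_cases hrδ : r ≤ δ
      · have habs := hφ_lip ξ r hrpos hrδ
        have h1 : (φ r ξ) ^ 2 ≤ (C * r) ^ 2 :=
          sq_le_sq' (by linarith [neg_abs_le (φ r ξ)])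
            ((le_abs_self _).trans habs)
        calc (φ r ξ) ^ 2 * (c₁ ξ * r ^ (-α - 1))
            ≤ (C * r) ^ 2 * (c₁ ξ * r ^ (-α - 1)) :=
              mul_le_mul_of_nonneg_right h1
                (mul_nonneg (hc₁_pos ξ).le (Real.rpow_nonneg hrpos.le _))
          _ = c₁ ξ * (C ^ 2 * r ^ (1 - α)) := by
              rw [show (1 - α) = ((2:ℕ) : ℝ) + (-α - 1) by push_cast; ring,
                Real.rpow_add hrpos, Real.rpow_natCast]
              ring
          _ = c₁ ξ * k r := by rw [hkdef]; simp [hrδ]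
      · have h1 : (φ r ξ) ^ 2 ≤ 1 := by
          have := abs_le.1 hphi
          nlinarith
        calc (φ r ξ) ^ 2 * (c₁ ξ * r ^ (-α - 1))
            ≤ 1 * (c₁ ξ * r ^ (-α - 1)) :=
              mul_le_mul_of_nonneg_right h1
                (mul_nonneg (hc₁_pos ξ).le (Real.rpow_nonneg hrpos.le _))
          _ = c₁ ξ * k r := by rw [hkdef]; simp [hrδ]
    · rw [if_neg hphi]
      exact mul_nonneg (hc₁_pos ξ).le (hk0 r hrpos)
  · -- condition (b)
    set k : ℝ → ℝ := fun r => if r ≤ 1 then r₀ ^ (-α - 1) else r ^ (-β - 1)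
      with hkdef
    have hk0 : ∀ r : ℝ, 0 < r → 0 ≤ k r := by
      intro r hr; simp only [hkdef]; split <;> positivity
    have hk_int : IntegrableOn k (Ioi (0:ℝ)) := by
      have h1 : IntegrableOn (fun _ : ℝ => r₀ ^ (-α - 1)) (Ioc (0:ℝ) 1) := by
        refine integrableOn_const ?_ (by simp)
        rw [Real.volume_Ioc]
        exact ENNReal.ofReal_ne_top
      have h2 : IntegrableOn (fun r : ℝ => r ^ (-β - 1)) (Ioi (1:ℝ)) :=
        integrableOn_Ioi_rpow_of_lt (by linarith) one_pos
      have h1' : IntegrableOn k (Ioc 0 1) :=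
        h1.congr_fun (fun r hr => by simp [hkdef, hr.2]) measurableSet_Ioc
      have h2' : IntegrableOn k (Ioi 1) :=
        h2.congr_fun (fun r hr => by simp [hkdef, not_le.2 (mem_Ioi.1 hr)])
          measurableSet_Ioi
      rw [← Ioc_union_Ioi_eq_Ioi zero_le_one]
      exact h1'.union h2'
    refine sato_aux_lt_top σ _ (fun ξ => C₁ ξ + C₂ ξ)
      (fun ξ => add_nonneg (hC₁_nonneg ξ) (hC₂_nonneg ξ)) (hC₁_int.add hC₂_int)
      k hk_int ?_
    intro ξ r hr
    have hrpos : (0:ℝ) < r := mem_Ioi.1 hr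
    by_cases hphi : 1 < φ r ξ
    · rw [if_pos hphi]
      by_cases hr1 : r ≤ 1
      · have hrr₀ : r₀ < r := by
          by_contra hcon
          push_neg at hcon
          have := hsmall ξ r hrpos hcon
          have := le_abs_self (φ r ξ)
          linarith
        have hmono : r ^ (-α - 1) ≤ r₀ ^ (-α - 1) :=
          Real.rpow_le_rpow_of_nonpos hr₀ hrr₀.le (by linarith)
        calc q r ξ ≤ C₁ ξ * r ^ (-α - 1) := hD1 ξ r hrpos hr1
          _ ≤ C₁ ξ * r₀ ^ (-α - 1) :=
              mul_le_mul_of_nonneg_left hmono (hC₁_nonneg ξ)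
          _ ≤ (C₁ ξ + C₂ ξ) * r₀ ^ (-α - 1) := by
              apply mul_le_mul_of_nonneg_right (by linarith [hC₂_nonneg ξ])
              positivity
          _ = (C₁ ξ + C₂ ξ) * k r := by rw [hkdef]; simp [hr1]
      · have hr1' : (1:ℝ) ≤ r := (not_le.1 hr1).le
        calc q r ξ ≤ C₂ ξ * r ^ (-β - 1) := hD2 ξ r hr1'
          _ ≤ (C₁ ξ + C₂ ξ) * r ^ (-β - 1) := by
              apply mul_le_mul_of_nonneg_right (by linarith [hC₁_nonneg ξ])
              positivity
          _ = (C₁ ξ + C₂ ξ) * k r := by rw [hkdef]; simp [hr1]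
    · rw [if_neg hphi]
      exact mul_nonneg (add_nonneg (hC₁_nonneg ξ) (hC₂_nonneg ξ)) (hk0 r hrpos)
  · -- condition (c)
    set k : ℝ → ℝ := fun r => if r₀ < r then r ^ (-α - 1) else 0 with hkdef
    have hk0 : ∀ r : ℝ, 0 < r → 0 ≤ k r := by
      intro r hr; simp only [hkdef]; split <;> positivity
    have hk_int : IntegrableOn k (Ioi (0:ℝ)) := by
      have h1 : IntegrableOn (fun _ : ℝ => (0:ℝ)) (Ioc (0:ℝ) r₀) :=
        integrableOn_zero
      have h2 : IntegrableOn (fun r : ℝ => r ^ (-α - 1)) (Ioi r₀) :=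
        integrableOn_Ioi_rpow_of_lt (by linarith) hr₀
      have h1' : IntegrableOn k (Ioc 0 r₀) :=
        h1.congr_fun (fun r hr => by simp [hkdef, not_lt.2 hr.2]) measurableSet_Ioc
      have h2' : IntegrableOn k (Ioi r₀) :=
        h2.congr_fun (fun r hr => by simp [hkdef, mem_Ioi.1 hr]) measurableSet_Ioi
      rw [← Ioc_union_Ioi_eq_Ioi hr₀.le]
      exact h1'.union h2'
    refine sato_aux_lt_top σ _ c₁ (fun ξ => (hc₁_pos ξ).le) hc₁_int k hk_int ?_
    intro ξ r hr
    have hrpos : (0:ℝ) < r := mem_Ioi.1 hr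
    by_cases hphi : φ r ξ < -1
    · rw [if_pos hphi]
      have hrr₀ : r₀ < r := by
        by_contra hcon
        push_neg at hcon
        have := hsmall ξ r hrpos hcon
        have := neg_abs_le (φ r ξ)
        linarith
      rw [hkdef]
      simp [hrr₀]
    · rw [if_neg hphi]
      exact mul_nonneg (hc₁_pos ξ).le (hk0 r hrpos)
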